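/- Let F be a field and Γ_F = SL₂(F[t,t⁻¹]) with δ = (D, D⁻¹) ∈ SL₂(F(t)) × SL₂(F(t)) where D = diag(t, t⁻¹), and Γ_F embedded diagonally. Then for every L there are only finitely many n ∈ ℕ for which there exists M ∈ Γ_F such that all entries of M·Dⁿ have ν_∞ ≥ L and all entries of M·D⁻ⁿ have ν₀ ≥ L. In particular, any infinite subset of {Γ_F·δⁿ : n ∈ ℕ} is unbounded in the quotient Γ_F \ (SL₂(F(t)) × SL₂(F(t))) with the metric induced by the valuations ν_∞ and ν₀ on the two factors. -/

import Mathlib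

open RatFunc Polynomial

/- The valuation at infinity on `F(t)`: `ν_∞(p/q) = deg q - deg p`, with `ν_∞ 0 = ⊤`. -/
open Classical in
noncomputable def nuInf {F : Type*} [Field F] (x : RatFunc F) : WithTop ℤ :=
  if x = 0 then ⊤ else (-(x.intDegree) : ℤ)

/- The valuation at zero on `F(t)`: the order of vanishing at `t = 0`, with `ν₀ 0 = ⊤`. -/
open Classical in
noncomputable def nuZero {F : Type*} [Field F] (x : RatFunc F) : WithTop ℤ :=
  if x = 0 then ⊤
  else ((x.num.rootMultiplicity 0 : ℤ) - (x.denom.rootMultiplicity 0 : ℤ) : ℤ)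

open Matrix
open scoped MatrixGroups

set_option synthInstance.maxHeartbeats 1000000

/-- The canonical embedding of the Laurent polynomial ring `F[t,t⁻¹]` into the rational
function field `F(t)`, sending `T` to `X`. -/
noncomputable def laurentToRatFunc (F : Type*) [Field F] :
    LaurentPolynomial F →ₐ[F] RatFunc F :=
  (AddMonoidAlgebra.lift F (RatFunc F) ℤ)
    ((Units.coeHom (RatFunc F)).comp
      ((zpowersHom (RatFunc F)ˣ) (Units.mk0 RatFunc.X RatFunc.X_ne_zero)))

/-- The subgroup `SL₂(F[t,t⁻¹])` of `SL₂(F(t))`. -/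
noncomputable def laurentSL2 (F : Type*) [Field F] : Subgroup (SL(2, RatFunc F)) :=
  (Matrix.SpecialLinearGroup.map (laurentToRatFunc F).toRingHom).range

/-- The diagonal matrix `diag(tᵏ, t⁻ᵏ)` over `F(t)`. -/
noncomputable def diagT (F : Type*) [Field F] (k : ℤ) :
    Matrix (Fin 2) (Fin 2) (RatFunc F) :=
  !![RatFunc.X ^ k, 0; 0, RatFunc.X ^ (-k)]

section Aux

variable {F : Type*} [Field F]

lemma phi_T (k : ℤ) : laurentToRatFunc F (LaurentPolynomial.T k) = RatFunc.X ^ k := by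
  unfold laurentToRatFunc
  rw [LaurentPolynomial.T, AddMonoidAlgebra.lift_single]
  simp

lemma phi_toLaurent (q : Polynomial F) :
    laurentToRatFunc F q.toLaurent = algebraMap (Polynomial F) (RatFunc F) q := by
  have h : (laurentToRatFunc F).comp Polynomial.toLaurentAlg
      = IsScalarTower.toAlgHom F (Polynomial F) (RatFunc F) := by
    apply Polynomial.algHom_ext
    simp [Polynomial.toLaurentAlg_apply, Polynomial.toLaurent_X, phi_T, RatFunc.algebraMap_X]
  have := AlgHom.congr_fun h q
  simpa [Polynomial.toLaurentAlg_apply] using this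

lemma rm_le_natDegree {q : Polynomial F} (hq : q ≠ 0) :
    q.rootMultiplicity 0 ≤ q.natDegree := by
  have h := Polynomial.natDegree_le_of_dvd (Polynomial.pow_rootMultiplicity_dvd q 0) hq
  simpa using h

lemma rm_X_pow (m : ℕ) : (Polynomial.X ^ m : Polynomial F).rootMultiplicity 0 = m := by
  have : (Polynomial.X ^ m : Polynomial F) = (Polynomial.X - Polynomial.C 0) ^ m := by simp
  rw [this, Polynomial.rootMultiplicity_X_sub_C_pow]

lemma cross_mul {x : RatFunc F} (hx : x ≠ 0) {r s : Polynomial F} (hr : r ≠ 0) (hs : s ≠ 0)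
    (h : x * algebraMap (Polynomial F) (RatFunc F) s = algebraMap (Polynomial F) (RatFunc F) r) :
    x.intDegree = (r.natDegree : ℤ) - s.natDegree ∧
    (x.num.rootMultiplicity 0 : ℤ) - (x.denom.rootMultiplicity 0 : ℤ)
      = (r.rootMultiplicity 0 : ℤ) - (s.rootMultiplicity 0 : ℤ) := by
  have hnum : x.num ≠ 0 := RatFunc.num_ne_zero hx
  have hden : x.denom ≠ 0 := x.denom_ne_zero
  have hdenR : algebraMap (Polynomial F) (RatFunc F) x.denom ≠ 0 :=
    RatFunc.algebraMap_ne_zero hden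
  have hx' : algebraMap (Polynomial F) (RatFunc F) x.num
      = x * algebraMap (Polynomial F) (RatFunc F) x.denom :=
    (div_eq_iff hdenR).mp (RatFunc.num_div_denom x)
  have hmul : x.num * s = r * x.denom := by
    apply RatFunc.algebraMap_injective F
    rw [_root_.map_mul, _root_.map_mul, hx', ← h]
    ring
  have hdeg : x.num.natDegree + s.natDegree = r.natDegree + x.denom.natDegree := by
    rw [← Polynomial.natDegree_mul hnum hs, ← Polynomial.natDegree_mul hr hden, hmul]
  have hrm : x.num.rootMultiplicity 0 + s.rootMultiplicity 0
      = r.rootMultiplicity 0 + x.denom.rootMultiplicity 0 := by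
    rw [← Polynomial.rootMultiplicity_mul (x := (0:F)) (mul_ne_zero hnum hs),
        ← Polynomial.rootMultiplicity_mul (x := (0:F)) (mul_ne_zero hr hden), hmul]
  constructor
  · unfold RatFunc.intDegree; omega
  · omega

lemma val_poly_mul_zpow {q : Polynomial F} (hq : q ≠ 0) (k : ℤ) :
    (algebraMap (Polynomial F) (RatFunc F) q * RatFunc.X ^ k) ≠ 0 ∧
    (algebraMap (Polynomial F) (RatFunc F) q * RatFunc.X ^ k).intDegree
        = (q.natDegree : ℤ) + k ∧
    (((algebraMap (Polynomial F) (RatFunc F) q * RatFunc.X ^ k).num.rootMultiplicity 0 : ℤ)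
      - ((algebraMap (Polynomial F) (RatFunc F) q * RatFunc.X ^ k).denom.rootMultiplicity 0 : ℤ))
        = (q.rootMultiplicity 0 : ℤ) + k := by
  have hX : (RatFunc.X : RatFunc F) ≠ 0 := RatFunc.X_ne_zero
  have hx : (algebraMap (Polynomial F) (RatFunc F) q * RatFunc.X ^ k) ≠ 0 :=
    mul_ne_zero (RatFunc.algebraMap_ne_zero hq) (zpow_ne_zero k hX)
  obtain ⟨m₁, m₂, hk⟩ : ∃ m₁ m₂ : ℕ, (m₁ : ℤ) - m₂ = k :=
    ⟨k.toNat, (-k).toNat, by omega⟩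
  have hs : (Polynomial.X ^ m₂ : Polynomial F) ≠ 0 := pow_ne_zero _ Polynomial.X_ne_zero
  have hr : q * Polynomial.X ^ m₁ ≠ 0 := mul_ne_zero hq (pow_ne_zero _ Polynomial.X_ne_zero)
  have hXpow : ∀ m : ℕ, algebraMap (Polynomial F) (RatFunc F) (Polynomial.X ^ m)
      = RatFunc.X ^ (m : ℤ) := by
    intro m
    rw [map_pow, RatFunc.algebraMap_X, zpow_natCast]
  have hcross : (algebraMap (Polynomial F) (RatFunc F) q * RatFunc.X ^ k)
        * algebraMap (Polynomial F) (RatFunc F) (Polynomial.X ^ m₂)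
      = algebraMap (Polynomial F) (RatFunc F) (q * Polynomial.X ^ m₁) := by
    rw [_root_.map_mul, hXpow, hXpow, mul_assoc, ← zpow_add₀ hX]
    congr 2
    omega
  obtain ⟨h1, h2⟩ := cross_mul hx hr hs hcross
  refine ⟨hx, ?_, ?_⟩
  · rw [h1, Polynomial.natDegree_mul hq (pow_ne_zero _ Polynomial.X_ne_zero),
      Polynomial.natDegree_X_pow, Polynomial.natDegree_X_pow]
    push_cast
    omega
  · rw [h2, Polynomial.rootMultiplicity_mul (x := (0:F)) hr, rm_X_pow, rm_X_pow]
    push_cast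
    omega

lemma key_lemma {p : LaurentPolynomial F} {n : ℕ} {L : ℤ} (hn : 0 < L + n)
    (h1 : (L : WithTop ℤ) ≤ nuInf (laurentToRatFunc F p * RatFunc.X ^ (n : ℤ)))
    (h2 : (L : WithTop ℤ) ≤ nuZero (laurentToRatFunc F p * RatFunc.X ^ (-n : ℤ))) :
    p = 0 := by
  by_contra hp
  obtain ⟨d, q, hq⟩ := p.exists_T_pow
  have hq0 : q ≠ 0 := by
    rintro rfl
    apply hp
    have h0 : p * LaurentPolynomial.T (d : ℤ) = 0 := by rw [← hq]; simp
    have h3 : p = p * LaurentPolynomial.T (d : ℤ) * LaurentPolynomial.T (-(d : ℤ)) := by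
      rw [mul_assoc, ← LaurentPolynomial.T_add]
      simp
    rw [h3, h0, zero_mul]
  have hphi : laurentToRatFunc F p
      = algebraMap (Polynomial F) (RatFunc F) q * RatFunc.X ^ (-(d : ℤ)) := by
    have h := congrArg (laurentToRatFunc F) hq
    rw [phi_toLaurent, _root_.map_mul, phi_T] at h
    rw [h, mul_assoc, ← zpow_add₀ RatFunc.X_ne_zero]
    simp
  have e1 : laurentToRatFunc F p * RatFunc.X ^ (n : ℤ)
      = algebraMap (Polynomial F) (RatFunc F) q * RatFunc.X ^ ((n : ℤ) - d) := by
    rw [hphi, mul_assoc, ← zpow_add₀ RatFunc.X_ne_zero]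
    congr 2
    omega
  have e2 : laurentToRatFunc F p * RatFunc.X ^ (-n : ℤ)
      = algebraMap (Polynomial F) (RatFunc F) q * RatFunc.X ^ (-(n : ℤ) - d) := by
    rw [hphi, mul_assoc, ← zpow_add₀ RatFunc.X_ne_zero]
    congr 2
    omega
  obtain ⟨hx1, hd1, _⟩ := val_poly_mul_zpow (F := F) hq0 ((n : ℤ) - d)
  obtain ⟨hx2, _, hd2⟩ := val_poly_mul_zpow (F := F) hq0 (-(n : ℤ) - d)
  rw [e1] at h1
  rw [e2] at h2
  rw [nuInf, if_neg hx1, hd1] at h1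
  rw [nuZero, if_neg hx2, hd2] at h2
  have hrm := rm_le_natDegree hq0
  have h1' : L ≤ -((q.natDegree : ℤ) + ((n : ℤ) - d)) := by exact_mod_cast h1
  have h2' : L ≤ (q.rootMultiplicity 0 : ℤ) + (-(n : ℤ) - d) := by exact_mod_cast h2
  omega

end Aux

/-- For every `L` there are only finitely many `n` for which some `M ∈ SL₂(F[t,t⁻¹])` makes all
entries of `M·Dⁿ` have `ν_∞ ≥ L` and all entries of `M·D⁻ⁿ` have `ν₀ ≥ L`; consequently any
infinite subset of `{Γ_F·δⁿ}` is unbounded in the quotient (boundedness being expressed by a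
uniform lower bound `L` on the valuations of entries). -/
theorem stmt_12 {F : Type*} [Field F] :
    (∀ L : ℤ, {n : ℕ | ∃ M ∈ laurentSL2 F,
      (∀ i j, (L : WithTop ℤ) ≤ nuInf (((M : SL(2, RatFunc F)).1 * diagT F n) i j)) ∧
      (∀ i j, (L : WithTop ℤ) ≤ nuZero (((M : SL(2, RatFunc F)).1 * diagT F (-n)) i j))}.Finite) ∧
    (∀ S : Set ℕ, S.Infinite →
      ¬ ∃ L : ℤ, ∀ n ∈ S, ∃ M ∈ laurentSL2 F,
        (∀ i j, (L : WithTop ℤ) ≤ nuInf (((M : SL(2, RatFunc F)).1 * diagT F n) i j)) ∧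
        (∀ i j, (L : WithTop ℤ) ≤ nuZero (((M : SL(2, RatFunc F)).1 * diagT F (-n)) i j))) := by
  have main : ∀ L : ℤ, ∀ n : ℕ, (∃ M ∈ laurentSL2 F,
      (∀ i j, (L : WithTop ℤ) ≤ nuInf (((M : SL(2, RatFunc F)).1 * diagT F n) i j)) ∧
      (∀ i j, (L : WithTop ℤ) ≤ nuZero (((M : SL(2, RatFunc F)).1 * diagT F (-n)) i j))) →
      (n : ℤ) ≤ -L := by
    intro L n ⟨M, hM, h1, h2⟩
    by_contra hcon
    have hn : 0 < L + n := by omega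
    obtain ⟨N, rfl⟩ := hM
    have hentry : ∀ i j, ((Matrix.SpecialLinearGroup.map
        (laurentToRatFunc F).toRingHom N : SL(2, RatFunc F)).1) i j
        = laurentToRatFunc F (N.1 i j) := by
      intro i j
      rfl
    have hzero : ∀ i : Fin 2, N.1 i 0 = 0 := by
      intro i
      apply key_lemma (F := F) (n := n) (L := L) hn
      · have := h1 i 0
        have heq : ((Matrix.SpecialLinearGroup.map
            (laurentToRatFunc F).toRingHom N : SL(2, RatFunc F)).1 * diagT F n) i 0
            = laurentToRatFunc F (N.1 i 0) * RatFunc.X ^ (n : ℤ) := by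
          rw [diagT]
          rw [Matrix.mul_apply, Fin.sum_univ_two]
          simp [hentry]
        rwa [heq] at this
      · have := h2 i 0
        have heq : ((Matrix.SpecialLinearGroup.map
            (laurentToRatFunc F).toRingHom N : SL(2, RatFunc F)).1 * diagT F (-n)) i 0
            = laurentToRatFunc F (N.1 i 0) * RatFunc.X ^ (-n : ℤ) := by
          rw [diagT]
          rw [Matrix.mul_apply, Fin.sum_univ_two]
          simp [hentry]
        rwa [heq] at this
    have hdet : N.1.det = 1 := N.2
    rw [Matrix.det_fin_two, hzero 0, hzero 1] at hdet
    simp at hdet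
  constructor
  · intro L
    apply Set.Finite.subset (Set.finite_Iic ((-L).toNat))
    intro n hn
    have := main L n hn
    simp only [Set.mem_Iic]
    omega
  · intro S hS ⟨L, hL⟩
    apply hS
    apply Set.Finite.subset (Set.finite_Iic ((-L).toNat))
    intro n hn
    have := main L n (hL n hn)
    simp only [Set.mem_Iic]
    omega
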